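/- Under the assumptions of the previous setting (K̂ = [Vᵀ; A] with rank(V)=s, rank(K̂)=n, m ≥ n, X a left inverse of K̂, Ŷ = X·(I_s; O_{m,s})), if additionally s + rank(A) = n, then the null space of A equals the range of Ŷ. -/

import Mathlib

open Matrix

theorem stmt2 {m n s : ℕ} (hmn : n ≤ m)
    (A : Matrix (Fin m) (Fin n) ℝ) (V : Matrix (Fin n) (Fin s) ℝ)
    (K : Matrix (Fin s ⊕ Fin m) (Fin n) ℝ) (hK : K = Matrix.fromRows Vᵀ A)
    (hV : V.rank = s) (hKrank : K.rank = n)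
    (X : Matrix (Fin n) (Fin s ⊕ Fin m) ℝ) (hX : X * K = 1)
    (Y : Matrix (Fin n) (Fin s) ℝ)
    (hY : Y = X * Matrix.fromRows (1 : Matrix (Fin s) (Fin s) ℝ)
        (0 : Matrix (Fin m) (Fin s) ℝ))
    (hsum : s + A.rank = n) :
    LinearMap.ker A.mulVecLin = LinearMap.range Y.mulVecLin := by
  subst hK hY
  set X₁ := X.toCols₁ with hX₁
  set X₂ := X.toCols₂ with hX₂
  have hXc : X = Matrix.fromCols X₁ X₂ := (Matrix.fromCols_toCols X).symm
  have h1 : X₁ * Vᵀ + X₂ * A = 1 := by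
    rw [hXc, Matrix.fromCols_mul_fromRows] at hX; exact hX
  have hYX : X * Matrix.fromRows (1 : Matrix (Fin s) (Fin s) ℝ)
      (0 : Matrix (Fin m) (Fin s) ℝ) = X₁ := by
    rw [hXc, Matrix.fromCols_mul_fromRows, Matrix.mul_one, Matrix.mul_zero, add_zero]
  rw [hYX]
  have hker : LinearMap.ker A.mulVecLin ≤ LinearMap.range X₁.mulVecLin := by
    intro x hx
    have hx' : A.mulVec x = 0 := hx
    refine ⟨Vᵀ.mulVec x, ?_⟩
    have hone : (X₁ * Vᵀ + X₂ * A).mulVec x = x := by rw [h1, Matrix.one_mulVec]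
    simpa [Matrix.add_mulVec, ← Matrix.mulVec_mulVec, hx'] using hone
  have hkdim : Module.finrank ℝ (LinearMap.ker A.mulVecLin) = s := by
    have h := LinearMap.finrank_range_add_finrank_ker A.mulVecLin
    rw [Module.finrank_fin_fun] at h
    have hrk : A.rank = Module.finrank ℝ (LinearMap.range A.mulVecLin) := rfl
    omega
  have hrdim : Module.finrank ℝ (LinearMap.range X₁.mulVecLin) ≤ s := by
    simpa using (LinearMap.finrank_range_le X₁.mulVecLin).trans_eq
      (Module.finrank_fin_fun (n := s) ℝ)
  exact Submodule.eq_of_le_of_finrank_le hker (hrdim.trans_eq hkdim.symm)
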